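/- Let f : D² → D be holomorphic with f(0, w) = w for all w ∈ D. Then for all (z,w) ∈ D², |w − f(z,w)|² ≤ (1 − |w|²)/(1 − |z|²). -/

import Mathlib

open Metric Set

lemma moebius_identity (u v : ℂ) :
    ‖1 - (starRingEnd ℂ) v * u‖ ^ 2 - ‖u - v‖ ^ 2 = (1 - ‖u‖ ^ 2) * (1 - ‖v‖ ^ 2) := by
  have h1 : ‖1 - (starRingEnd ℂ) v * u‖ ^ 2 = Complex.normSq (1 - (starRingEnd ℂ) v * u) := by
    rw [Complex.sq_norm]
  have h2 : ‖u - v‖ ^ 2 = Complex.normSq (u - v) := by rw [Complex.sq_norm]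
  have h3 : ‖u‖ ^ 2 = Complex.normSq u := by rw [Complex.sq_norm]
  have h4 : ‖v‖ ^ 2 = Complex.normSq v := by rw [Complex.sq_norm]
  rw [h1, h2, h3, h4]
  simp only [Complex.normSq_apply, Complex.sub_re, Complex.sub_im, Complex.mul_re,
    Complex.mul_im, Complex.conj_re, Complex.conj_im, Complex.one_re, Complex.one_im]
  ring

set_option maxHeartbeats 1000000 in
theorem fixed_slice_quantitative_estimate
    (f : ℂ × ℂ → ℂ)
    (hf : DifferentiableOn ℂ f (ball (0 : ℂ) 1 ×ˢ ball (0 : ℂ) 1))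
    (hmap : MapsTo f (ball (0 : ℂ) 1 ×ˢ ball (0 : ℂ) 1) (ball (0 : ℂ) 1))
    (hslice : ∀ w ∈ ball (0 : ℂ) 1, f (0, w) = w) :
    ∀ z ∈ ball (0 : ℂ) 1, ∀ w ∈ ball (0 : ℂ) 1,
      ‖w - f (z, w)‖ ^ 2 ≤ (1 - ‖w‖ ^ 2) / (1 - ‖z‖ ^ 2) := by
  intro z hz w hw
  have hw1 : ‖w‖ < 1 := by simpa using hw
  have hz1 : ‖z‖ < 1 := by simpa using hz
  -- membership facts
  have hmem : ∀ x ∈ ball (0 : ℂ) 1, (x, w) ∈ ball (0 : ℂ) 1 ×ˢ ball (0 : ℂ) 1 := by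
    intro x hx; exact ⟨hx, hw⟩
  have hfb : ∀ x ∈ ball (0 : ℂ) 1, ‖f (x, w)‖ < 1 := by
    intro x hx; simpa using hmap (hmem x hx)
  have hden : ∀ x ∈ ball (0 : ℂ) 1, (1 - (starRingEnd ℂ) w * f (x, w)) ≠ 0 := by
    intro x hx
    have hlt : ‖(starRingEnd ℂ) w * f (x, w)‖ < 1 := by
      rw [norm_mul]
      calc ‖(starRingEnd ℂ) w‖ * ‖f (x, w)‖ ≤ 1 * ‖f (x, w)‖ := by
            apply mul_le_mul_of_nonneg_right _ (norm_nonneg _)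
            simpa using hw1.le
        _ < 1 := by simpa using hfb x hx
    intro h
    have h1 : (starRingEnd ℂ) w * f (x, w) = 1 := by linear_combination -h
    rw [h1] at hlt
    simp at hlt
  set g : ℂ → ℂ := fun x => (f (x, w) - w) / (1 - (starRingEnd ℂ) w * f (x, w)) with hg
  have hcomp : DifferentiableOn ℂ (fun x : ℂ => f (x, w)) (ball (0 : ℂ) 1) := by
    apply hf.comp (f := fun x : ℂ => (x, w))
    · exact (differentiable_id.prodMk (differentiable_const w)).differentiableOn
    · intro x hx; exact hmem x hx
  have hgd : DifferentiableOn ℂ g (ball (0 : ℂ) 1) := by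
    apply DifferentiableOn.div
    · exact hcomp.sub (differentiableOn_const w)
    · exact (differentiableOn_const _).sub ((differentiableOn_const _).mul hcomp)
    · exact hden
  have hg0 : g 0 = 0 := by
    simp [hg, hslice w hw]
  have hnumlt : ∀ x ∈ ball (0 : ℂ) 1,
      ‖f (x, w) - w‖ < ‖1 - (starRingEnd ℂ) w * f (x, w)‖ := by
    intro x hx
    have hid := moebius_identity (f (x, w)) w
    have hpos : (0:ℝ) < (1 - ‖f (x, w)‖ ^ 2) * (1 - ‖w‖ ^ 2) := by
      apply mul_pos <;> nlinarith [hfb x hx, hw1, norm_nonneg (f (x, w)), norm_nonneg w]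
    have : ‖f (x, w) - w‖ ^ 2 < ‖1 - (starRingEnd ℂ) w * f (x, w)‖ ^ 2 := by linarith
    exact lt_of_pow_lt_pow_left₀ 2 (norm_nonneg _) this
  have hgmaps : MapsTo g (ball (0 : ℂ) 1) (ball (0 : ℂ) 1) := by
    intro x hx
    rw [mem_ball_zero_iff, hg]
    simp only
    rw [norm_div]
    have hd := hnumlt x hx
    have hdpos : (0:ℝ) < ‖1 - (starRingEnd ℂ) w * f (x, w)‖ :=
      lt_of_le_of_lt (norm_nonneg _) hd
    exact (div_lt_one hdpos).2 hd
  -- Schwarz lemma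
  have hschwarz : ‖g z‖ ≤ ‖z‖ := by
    have := Complex.norm_le_norm_of_mapsTo_ball hgd (hgmaps.mono_right ball_subset_closedBall) hg0 (R := 1) (z := z)
      (by simpa using hz1)
    simpa using this
  -- unfold the Schwarz estimate
  have hkey : ‖f (z, w) - w‖ ≤ ‖z‖ * ‖1 - (starRingEnd ℂ) w * f (z, w)‖ := by
    have hne := hden z hz
    have : f (z, w) - w = g z * (1 - (starRingEnd ℂ) w * f (z, w)) := by
      show f (z, w) - w = (f (z, w) - w) / (1 - (starRingEnd ℂ) w * f (z, w)) * (1 - (starRingEnd ℂ) w * f (z, w))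
      exact (div_mul_cancel₀ _ hne).symm
    rw [this, norm_mul]
    exact mul_le_mul_of_nonneg_right hschwarz (norm_nonneg _)
  set a := f (z, w) with ha
  set d := ‖w - a‖ with hdd
  set r := ‖z‖ with hr
  set s := ‖w‖ with hs
  have hs0' : 0 ≤ s := norm_nonneg w
  have hda : ‖a - w‖ = d := norm_sub_rev a w
  -- bound the denominator
  have hdenb : ‖1 - (starRingEnd ℂ) w * a‖ ≤ (1 - s ^ 2) + s * d := by
    have hsplit : 1 - (starRingEnd ℂ) w * a
        = (1 - (starRingEnd ℂ) w * w) + (starRingEnd ℂ) w * (w - a) := by ring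
    have h1 : ‖(1 : ℂ) - (starRingEnd ℂ) w * w‖ = 1 - s ^ 2 := by
      have hns : Complex.normSq w = s ^ 2 := by
        rw [Complex.normSq_eq_norm_sq]
      have he : (starRingEnd ℂ) w * w = (Complex.normSq w : ℂ) := by
        rw [mul_comm, Complex.mul_conj]
      have he2 : ((1 : ℂ) - (Complex.normSq w : ℂ)) = ((1 - Complex.normSq w : ℝ) : ℂ) := by
        push_cast; ring
      rw [he, he2, Complex.norm_real, Real.norm_eq_abs, abs_of_nonneg, hns]
      nlinarith [hw1, hs0']
    calc ‖1 - (starRingEnd ℂ) w * a‖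
        ≤ ‖(1 : ℂ) - (starRingEnd ℂ) w * w‖ + ‖(starRingEnd ℂ) w * (w - a)‖ := by
          rw [hsplit]; exact norm_add_le _ _
      _ = (1 - s ^ 2) + s * d := by
          rw [h1, norm_mul, RCLike.norm_conj]
  have hkey2 : d ≤ r * ((1 - s ^ 2) + s * d) := by
    calc d = ‖a - w‖ := hda.symm
      _ ≤ r * ‖1 - (starRingEnd ℂ) w * a‖ := hkey
      _ ≤ r * ((1 - s ^ 2) + s * d) :=
        mul_le_mul_of_nonneg_left hdenb (norm_nonneg z)
  have hr0 : 0 ≤ r := norm_nonneg z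
  have hs0 : 0 ≤ s := norm_nonneg w
  have hd0 : 0 ≤ d := norm_nonneg _
  have hrs : (0:ℝ) < 1 - r * s := by nlinarith
  have hA : d * (1 - r * s) ≤ r * (1 - s ^ 2) := by nlinarith
  have hB : (d * (1 - r * s)) ^ 2 ≤ (r * (1 - s ^ 2)) ^ 2 := by
    apply pow_le_pow_left₀ (by positivity) hA
  have hC : (1 - r ^ 2) * (1 - s ^ 2) ≤ (1 - r * s) ^ 2 := by nlinarith [sq_nonneg (r - s)]
  have hE : d ^ 2 * ((1 - r ^ 2) * (1 - s ^ 2)) ≤ d ^ 2 * (1 - r * s) ^ 2 := by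
    apply mul_le_mul_of_nonneg_left hC (sq_nonneg d)
  have hs2 : (0:ℝ) < 1 - s ^ 2 := by nlinarith
  have hr2 : r ^ 2 ≤ 1 := by nlinarith
  have hF : (r * (1 - s ^ 2)) ^ 2 ≤ (1 - s ^ 2) ^ 2 := by
    nlinarith [sq_nonneg (1 - s ^ 2), hr2]
  rw [le_div_iff₀ (by nlinarith : (0:ℝ) < 1 - r ^ 2)]
  nlinarith [hB, hE, hF, hs2, mul_pos hs2 hs2]
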